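/- Let C be a finite alphabet and X ⊆ C^ℕ a subshift. Then X is sofic if and only if X is ω-regular. -/

import Mathlib

open scoped BigOperators

/-- A language is regular if it is accepted by a DFA with finitely many states. -/
def IsRegularLang {α : Type*} (L : Set (List α)) : Prop :=
  ∃ (σ : Type) (_ : Fintype σ) (M : DFA α σ), ∀ w : List α, w ∈ M.accepts ↔ w ∈ L

/-- Pad a word over `A` to length `M` by prepending the padding symbol `none`. -/
def padOne {A : Type*} (M : ℕ) (w : List A) : List (Option A) :=
  List.replicate (M - w.length) none ++ w.map some

/-- The padded form of a `d`-tuple of words over `A`, as a word over `(A ∪ {#})^d`. -/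
def padTuple {A : Type*} {d : ℕ} (ws : Fin d → List A) : List (Fin d → Option A) :=
  List.ofFn fun j : Fin (Finset.univ.sup fun i : Fin d => (ws i).length) =>
    fun i : Fin d =>
      (padOne (Finset.univ.sup fun i : Fin d => (ws i).length) (ws i)).getD j.val none

/-- An abstract numeration system over the alphabet `A`, encoded by the order isomorphism
`rep : ℕ → L ⊆ A*` enumerating its (infinite) language in increasing order. -/
structure ANS (A : Type*) where
  rep : ℕ → List A
  inj : Function.Injective rep

/-- A set `Y ⊆ ℕ^d` is `S`-recognizable if the padded representations of its members form
a regular language. -/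
def ANS.Recognizable {A : Type*} (S : ANS A) {d : ℕ} (Y : Set (Fin d → ℕ)) : Prop :=
  IsRegularLang { w : List (Fin d → Option A) | ∃ t ∈ Y, w = padTuple fun i => S.rep (t i) }

/-- An ANS is addable if the graph of addition is `S`-recognizable. -/
def ANS.Addable {A : Type*} (S : ANS A) : Prop :=
  S.Recognizable { t : Fin 3 → ℕ | t 0 + t 1 = t 2 }

/-- An ANS is comparable if the relation `≤` is `S`-recognizable. -/
def ANS.Comparable {A : Type*} (S : ANS A) : Prop :=
  S.Recognizable { t : Fin 2 → ℕ | t 0 ≤ t 1 }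

/-- An ANS is regular if `ℕ` (i.e. its language) is `S`-recognizable. -/
def ANS.IsRegularANS {A : Type*} (S : ANS A) : Prop :=
  S.Recognizable (Set.univ : Set (Fin 1 → ℕ))

/-- The unary ANS, with language `0*` ordered by length. -/
def unaryANS : ANS Unit where
  rep := fun n => List.replicate n ()
  inj := fun m n h => by simpa using congrArg List.length h

/-- `x` is `S`-automatic: some DFAO outputs `x n` on input `rep_S n`. -/
def SAutomatic {A C : Type*} (S : ANS A) (x : ℕ → C) : Prop :=
  ∃ (Q : Type) (_ : Fintype Q) (M : DFA A Q) (τ : Q → C),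
    ∀ n : ℕ, τ (M.eval (S.rep n)) = x n

/-- The shift map on one-sided infinite words. -/
def shiftMap {C : Type*} (x : ℕ → C) : ℕ → C := fun n => x (n + 1)

/-- The orbit closure of `x` (closure in the product topology over the discrete alphabet):
`y` belongs to it iff every finite prefix of `y` occurs in `x`. -/
def orbitClosure {C : Type*} (x : ℕ → C) : Set (ℕ → C) :=
  { y | ∀ n : ℕ, ∃ m : ℕ, ∀ i < n, y i = x (m + i) }

/-- A subshift: a shift-invariant subset of `C^ℕ` that is closed in the product topology
over the discrete alphabet (expressed combinatorially). -/
def IsSubshift {C : Type*} (X : Set (ℕ → C)) : Prop :=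
  (∀ x ∈ X, shiftMap x ∈ X) ∧
  ∀ y : ℕ → C, (∀ n : ℕ, ∃ x ∈ X, ∀ i < n, y i = x i) → y ∈ X

/-- The language of a set of infinite words: all finite factors of its elements. -/
def LangOf {C : Type*} (X : Set (ℕ → C)) : Set (List C) :=
  { w | ∃ x ∈ X, ∃ p : ℕ, w = List.ofFn fun i : Fin w.length => x (p + i) }

/-- A word is right special in (the language of) `X` if it has two distinct one-letter
extensions in the language of `X`. -/
def RightSpecial {C : Type*} (X : Set (ℕ → C)) (w : List C) : Prop :=
  ∃ a b : C, a ≠ b ∧ w ++ [a] ∈ LangOf X ∧ w ++ [b] ∈ LangOf X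

/-- The factor complexity of `x`: the number of distinct factors of length `n`. -/
noncomputable def factorComplexity {C : Type*} (x : ℕ → C) (n : ℕ) : ℕ :=
  Set.ncard { w : List C | ∃ p : ℕ, w = List.ofFn fun i : Fin n => x (p + i) }

/-- `T` is a strategy tree witnessing `α ∈ W(X)`: a prefix-closed set of finite words
containing the empty word, in which every word of length `i` has exactly `α i + 1`
one-letter extensions, and all whose infinite branches lie in `X`. -/
def IsStrategyTree {C : Type*} (X : Set (ℕ → C)) (α : ℕ → ℕ) (T : Set (List C)) : Prop :=
  ([] : List C) ∈ T ∧
  (∀ u v : List C, u ++ v ∈ T → u ∈ T) ∧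
  (∀ w ∈ T, Set.ncard { c : C | w ++ [c] ∈ T } = α w.length + 1) ∧
  (∀ y : ℕ → C, (∀ n : ℕ, (List.ofFn fun i : Fin n => y i) ∈ T) → y ∈ X)

/-- The winning shift of `X ⊆ C^ℕ`, a subset of `ℕ^ℕ`. -/
def winningShift {C : Type*} (X : Set (ℕ → C)) : Set (ℕ → ℕ) :=
  { α | ∃ T : Set (List C), IsStrategyTree X α T }

/-- Membership in the winning set of a set `X` of finite words, defined recursively:
`ε ∈ W(X)` iff `ε ∈ X`, and `a :: α ∈ W(X)` iff there is a set of `a + 1` letters `c`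
such that `α` is in the winning set of the left quotient of `X` by `c`. -/
def winningSetMem {C : Type*} : List ℕ → Set (List C) → Prop
  | [], X => [] ∈ X
  | a :: α, X => ∃ S : Finset C, S.card = a + 1 ∧ ∀ c ∈ S, winningSetMem α { w | c :: w ∈ X }

/-- `Σ y = m`: the sum of the letters of `y ∈ ℕ^ℕ` is finite and equals `m`. -/
def sumEq (y : ℕ → ℕ) (m : ℕ) : Prop :=
  (Function.support y).Finite ∧ ∑ᶠ i, y i = m

/-- `Y ⊆ ℕ^ℕ` has finite coding dimension: the sums `Σ y`, `y ∈ Y`, are uniformly bounded. -/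
def FiniteCodingDim (Y : Set (ℕ → ℕ)) : Prop :=
  ∃ d : ℕ, ∀ y ∈ Y, ∀ F : Finset ℕ, ∑ i ∈ F, y i ≤ d

/-- The set `{ν(y) : y ∈ Y, Σy = k} ⊆ ℕᵏ`: nondecreasing `k`-tuples `t` such that the word
whose letter at `j` is the number of occurrences of `j` in `t` belongs to `Y`. -/
def nuSet (Y : Set (ℕ → ℕ)) (k : ℕ) : Set (Fin k → ℕ) :=
  { t | Monotone t ∧ (fun j => Set.ncard { i : Fin k | t i = j }) ∈ Y }

/-- `Y ⊆ ℕ^ℕ` is weakly `S`-codable if `{ν(y) : y ∈ Y, Σy = k}` is `S`-recognizable for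
every `k`. -/
def WeaklySCodable {A : Type*} (S : ANS A) (Y : Set (ℕ → ℕ)) : Prop :=
  ∀ k : ℕ, S.Recognizable (nuSet Y k)

/-- `Y ⊆ ℕ^ℕ` is `S`-codable if it is weakly `S`-codable and has finite coding dimension. -/
def SCodable {A : Type*} (S : ANS A) (Y : Set (ℕ → ℕ)) : Prop :=
  WeaklySCodable S Y ∧ FiniteCodingDim Y

/-- `P_{111}(Y)`: strictly increasing triples `(a, b, c)` such that the word with letter `1`
exactly at positions `a`, `b`, `c` and `0` elsewhere belongs to `Y`. -/
def P111 (Y : Set (ℕ → ℕ)) : Set (Fin 3 → ℕ) :=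
  { t | t 0 < t 1 ∧ t 1 < t 2 ∧
        (fun j => if j = t 0 ∨ j = t 1 ∨ j = t 2 then 1 else 0) ∈ Y }

/-- `P_v(Y)` for a finite word `v` over `ℕ`: strictly increasing tuples `n` such that the
word with letter `v i` at position `n i` and `0` elsewhere belongs to `Y`. -/
def PvSet (v : List ℕ) (Y : Set (ℕ → ℕ)) : Set (Fin v.length → ℕ) :=
  { n | StrictMono n ∧
        (fun j => ∑ i : Fin v.length, if n i = j then v.get i else 0) ∈ Y }

/-- `X` is sofic: the set of label sequences of right-infinite paths in a finite
edge-labeled graph. -/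
def IsSofic {C : Type*} (X : Set (ℕ → C)) : Prop :=
  ∃ (V : Type) (_ : Fintype V) (E : Set (V × C × V)),
    X = { x | ∃ p : ℕ → V, ∀ n : ℕ, (p n, x n, p (n + 1)) ∈ E }

/-- The factor `x[a..b-1]` of an infinite word. -/
def segmentOf {C : Type*} (x : ℕ → C) (a b : ℕ) : List C :=
  List.ofFn fun i : Fin (b - a) => x (a + i)

/-- `U · V^ω`: infinite words that decompose as a word of `U` followed by infinitely many
nonempty words of `V`. -/
def omegaIter {C : Type*} (U V : Set (List C)) : Set (ℕ → C) :=
  { x | ∃ k : ℕ → ℕ, StrictMono k ∧ segmentOf x 0 (k 0) ∈ U ∧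
        ∀ i : ℕ, segmentOf x (k i) (k (i + 1)) ∈ V }

/-- `X ⊆ C^ℕ` is ω-regular: a finite union of sets `U · V^ω` with `U`, `V` regular. -/
def IsOmegaRegular {C : Type*} (X : Set (ℕ → C)) : Prop :=
  ∃ (n : ℕ) (U V : Fin n → Set (List C)),
    (∀ i, IsRegularLang (U i) ∧ IsRegularLang (V i)) ∧
    X = ⋃ i, omegaIter (U i) (V i)

/-- The words `p₁ = a`, `p_{k+1} = p_k bᵏ p_k` (with `a = false`, `b = true`). -/
def pWord : ℕ → List Bool
  | 0 => []
  | 1 => [false]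
  | (k + 2) => pWord (k + 1) ++ List.replicate (k + 1) true ++ pWord (k + 1)

/-- Combinatorial continuity of `φ` on `Y` for product topologies over discrete alphabets:
every finite prefix of `φ y` is determined by a finite prefix of `y`. -/
def ContOn {B C : Type*} (φ : (ℕ → B) → (ℕ → C)) (Y : Set (ℕ → B)) : Prop :=
  ∀ y ∈ Y, ∀ n : ℕ, ∃ m : ℕ, ∀ y' ∈ Y, (∀ i < m, y' i = y i) → ∀ i < n, φ y' i = φ y i


/-! ### Auxiliary lemmas -/

lemma segmentOf_length {C : Type*} (x : ℕ → C) (a b : ℕ) :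
    (segmentOf x a b).length = b - a := by simp [segmentOf]

lemma segmentOf_get {C : Type*} (x : ℕ → C) (a b : ℕ) (i : ℕ)
    (h : i < (segmentOf x a b).length) :
    (segmentOf x a b).get ⟨i, h⟩ = x (a + i) := by
  simp [segmentOf, List.get_ofFn]

lemma segmentOf_succ {C : Type*} (x : ℕ → C) (a n : ℕ) (h : a ≤ n) :
    segmentOf x a (n + 1) = segmentOf x a n ++ [x n] := by
  apply List.ext_getElem (by simp [segmentOf]; omega)
  intro i h1 h2
  simp only [segmentOf, List.getElem_ofFn, List.getElem_append, List.length_ofFn]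
  split
  · rfl
  · rename_i hge
    have hi : i - (n - a) = 0 := by simp [segmentOf, List.length_ofFn] at h1; omega
    have : a + i = n := by simp [segmentOf, List.length_ofFn] at h1; omega
    simp [hi, this]

lemma nfa_evalFrom_iff {α σ : Type*} (N : NFA α σ) (w : List α) (S : Set σ) (q : σ) :
    q ∈ N.evalFrom S w ↔
      ∃ f : ℕ → σ, f 0 ∈ S ∧ f w.length = q ∧
        ∀ i (h : i < w.length), f (i + 1) ∈ N.step (f i) (w.get ⟨i, h⟩) := by
  induction w generalizing S with
  | nil =>
      constructor
      · intro h; exact ⟨fun _ => q, h, rfl, fun i hi => absurd hi (by simp)⟩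
      · rintro ⟨f, hf0, rfl, -⟩; exact hf0
  | cons a t ih =>
      have hrw : N.evalFrom S (a :: t) = N.evalFrom (N.stepSet S a) t := rfl
      rw [hrw, ih]
      constructor
      · rintro ⟨g, hg0, hglen, hgstep⟩
        rw [NFA.mem_stepSet] at hg0
        obtain ⟨s, hs, hstep⟩ := hg0
        refine ⟨fun n => Nat.rec s (fun n _ => g n) n, hs, hglen, ?_⟩
        intro i hi
        cases i with
        | zero => exact hstep
        | succ j => exact hgstep j (by simpa using hi)
      · rintro ⟨f, hf0, hflen, hfstep⟩
        refine ⟨fun n => f (n + 1), ?_, hflen, fun i hi => hfstep (i+1) (by simpa using hi)⟩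
        rw [NFA.mem_stepSet]
        exact ⟨f 0, hf0, hfstep 0 (by simp)⟩

lemma isRegular_of_nfa {C σ : Type} [Fintype σ] (N : NFA C σ) (L : Set (List C))
    (h : ∀ w, w ∈ N.accepts ↔ w ∈ L) : IsRegularLang L := by
  refine ⟨Set σ, inferInstance, N.toDFA, fun w => ?_⟩
  rw [show (N.toDFA.accepts : Language C) = N.accepts from N.toDFA_correct]
  exact h w

section Forward

variable {C V : Type} (E : Set (V × C × V))

def endAt (v : V) : Set (List C) :=
  {w | ∃ f : ℕ → V, f w.length = v ∧
    ∀ i (h : i < w.length), (f i, w.get ⟨i, h⟩, f (i + 1)) ∈ E}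

def loopAt (v : V) : Set (List C) :=
  {w | ∃ f : ℕ → V, f 0 = v ∧ f w.length = v ∧
    ∀ i (h : i < w.length), (f i, w.get ⟨i, h⟩, f (i + 1)) ∈ E}

def pathNFA (S A : Set V) : NFA C V where
  step q c := {q' | (q, c, q') ∈ E}
  start := S
  accept := A

lemma endAt_regular [Fintype V] (v : V) : IsRegularLang (endAt E v) := by
  refine isRegular_of_nfa (pathNFA E Set.univ {v}) _ (fun w => ?_)
  rw [NFA.mem_accepts]
  constructor
  · rintro ⟨q, hq, hmem⟩
    rw [nfa_evalFrom_iff] at hmem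
    obtain ⟨f, -, hlen, hstep⟩ := hmem
    exact ⟨f, by rw [hlen]; exact hq.symm ▸ rfl, hstep⟩
  · rintro ⟨f, hlen, hstep⟩
    refine ⟨v, rfl, ?_⟩
    rw [nfa_evalFrom_iff]
    exact ⟨f, trivial, hlen, hstep⟩

lemma loopAt_regular [Fintype V] (v : V) : IsRegularLang (loopAt E v) := by
  refine isRegular_of_nfa (pathNFA E {v} {v}) _ (fun w => ?_)
  rw [NFA.mem_accepts]
  constructor
  · rintro ⟨q, hq, hmem⟩
    rw [nfa_evalFrom_iff] at hmem
    obtain ⟨f, hf0, hlen, hstep⟩ := hmem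
    exact ⟨f, hf0, by rw [hlen]; exact hq.symm ▸ rfl, hstep⟩
  · rintro ⟨f, hf0, hlen, hstep⟩
    refine ⟨v, rfl, ?_⟩
    rw [nfa_evalFrom_iff]
    exact ⟨f, hf0, hlen, hstep⟩

end Forward

theorem sofic_to_omegaRegular {C : Type} (X : Set (ℕ → C)) (h : IsSofic X) :
    IsOmegaRegular X := by
  obtain ⟨V, hV, E, hX⟩ := h
  letI := hV
  refine ⟨Fintype.card V, fun i => endAt E ((Fintype.equivFin V).symm i),
    fun i => loopAt E ((Fintype.equivFin V).symm i),
    fun i => ⟨endAt_regular E _, loopAt_regular E _⟩, ?_⟩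
  rw [hX]
  apply Set.eq_of_subset_of_subset
  · -- paths ⊆ union
    rintro x ⟨p, hp⟩
    have : ∃ v, ({n | p n = v} : Set ℕ).Infinite := by
      obtain ⟨v, hv⟩ := Finite.exists_infinite_fiber p
      exact ⟨v, by rw [Set.infinite_coe_iff] at hv; convert hv using 1; rfl⟩
    obtain ⟨v, hinf⟩ := this
    set P := fun n => p n = v with hP
    have hinf' : (setOf P).Infinite := hinf
    have hmono : StrictMono (Nat.nth P) := Nat.nth_strictMono hinf'
    have hkv : ∀ j, p (Nat.nth P j) = v := Nat.nth_mem_of_infinite hinf'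
    refine Set.mem_iUnion.2 ⟨(Fintype.equivFin V) v, ?_⟩
    refine ⟨Nat.nth P, hmono, ?_, ?_⟩
    · simp only [Equiv.symm_apply_apply]
      refine ⟨p, ?_, ?_⟩
      · rw [segmentOf_length, Nat.sub_zero]; exact hkv 0
      · intro i hi
        rw [segmentOf_get]
        simpa using hp i
    · intro j
      simp only [Equiv.symm_apply_apply]
      have hle : Nat.nth P j ≤ Nat.nth P (j + 1) := (hmono (Nat.lt_succ_self j)).le
      refine ⟨fun m => p (Nat.nth P j + m), hkv j, ?_, ?_⟩
      · show p (Nat.nth P j + (segmentOf x (Nat.nth P j) (Nat.nth P (j+1))).length) = v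
        rw [segmentOf_length,
          show Nat.nth P j + (Nat.nth P (j+1) - Nat.nth P j) = Nat.nth P (j+1) by omega]
        exact hkv (j + 1)
      · intro i hi
        rw [segmentOf_get]
        exact hp (Nat.nth P j + i)
  · -- union ⊆ paths
    rintro x hx
    obtain ⟨i, hxi⟩ := Set.mem_iUnion.1 hx
    set v := (Fintype.equivFin V).symm i with hv
    obtain ⟨k, hkmono, hU, hVl⟩ := hxi
    obtain ⟨fU, hfUlen, hfUstep⟩ := hU
    choose fV hfV0 hfVlen hfVstep using hVl
    have hfUlen' : fU (k 0) = v := by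
      rw [segmentOf_length, Nat.sub_zero] at hfUlen; exact hfUlen
    have hfVlen' : ∀ j, fV j (k (j+1) - k j) = v := by
      intro j; have := hfVlen j; rwa [segmentOf_length] at this
    have hkle : ∀ j, k j ≤ k (j + 1) := fun j => (hkmono (Nat.lt_succ_self j)).le
    have hjle : ∀ j, j ≤ k j := fun j => hkmono.le_apply
    classical
    set jdx : ℕ → ℕ := fun m => Nat.findGreatest (fun j => k j ≤ m) m with hjdx
    have hjdx_spec : ∀ m, k 0 ≤ m → k (jdx m) ≤ m := by
      intro m hm
      exact Nat.findGreatest_spec (P := fun j => k j ≤ m) (Nat.zero_le m) hm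
    have hjdx_lt : ∀ m, k 0 ≤ m → m < k (jdx m + 1) := by
      intro m hm
      by_contra hcon
      push_neg at hcon
      exact Nat.findGreatest_is_greatest (P := fun j => k j ≤ m)
        (Nat.lt_succ_self _) (le_trans (hjle _) hcon) hcon
    have hjdx_eq : ∀ m j, k j ≤ m → m < k (j + 1) → jdx m = j := by
      intro m j h1 h2
      have hm0 : k 0 ≤ m := le_trans (hkmono.monotone (Nat.zero_le j)) h1
      have hge : j ≤ jdx m := Nat.le_findGreatest (P := fun j => k j ≤ m) (le_trans (hjle j) h1) h1
      have hle2 : jdx m ≤ j := by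
        by_contra hcon
        push_neg at hcon
        have : k (j + 1) ≤ k (jdx m) := hkmono.monotone hcon
        have := hjdx_spec m hm0
        omega
      omega
    set p : ℕ → V := fun m => if m < k 0 then fU m else fV (jdx m) (m - k (jdx m)) with hp
    have hpk : ∀ j, p (k j) = v := by
      intro j
      have h1 : ¬ (k j < k 0) := by
        have := hkmono.monotone (Nat.zero_le j); omega
      have h2 : jdx (k j) = j := hjdx_eq (k j) j le_rfl (hkmono (Nat.lt_succ_self j))
      simp only [hp, if_neg h1, h2, Nat.sub_self]
      exact hfV0 j
    have hpU : ∀ m, m ≤ k 0 → p m = fU m := by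
      intro m hm
      rcases Nat.lt_or_ge m (k 0) with h | h
      · simp [hp, h]
      · have : m = k 0 := by omega
        rw [this, hpk 0, hfUlen']
    refine ⟨p, fun m => ?_⟩
    rcases Nat.lt_or_ge m (k 0) with hm | hm
    · -- within U segment
      rw [hpU m hm.le, hpU (m+1) hm]
      have hlen : m < (segmentOf x 0 (k 0)).length := by rw [segmentOf_length]; omega
      have := hfUstep m hlen
      rwa [segmentOf_get, Nat.zero_add] at this
    · -- within V segment jdx m
      set j := jdx m with hj
      have h1 : k j ≤ m := hjdx_spec m hm
      have h2 : m < k (j + 1) := hjdx_lt m hm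
      have hpm : p m = fV j (m - k j) := by
        have : ¬ (m < k 0) := by omega
        simp [hp, this, hj]
      have hpm1 : p (m + 1) = fV j (m + 1 - k j) := by
        rcases Nat.lt_or_ge (m+1) (k (j+1)) with h3 | h3
        · have : ¬ (m + 1 < k 0) := by omega
          have he : jdx (m+1) = j := hjdx_eq (m+1) j (by omega) h3
          simp [hp, this, he]
        · have h4 : m + 1 = k (j + 1) := by omega
          rw [h4, hpk (j+1)]
          exact (hfVlen' j).symm
      rw [hpm, hpm1]
      have hlen : m - k j < (segmentOf x (k j) (k (j+1))).length := by
        rw [segmentOf_length]; omega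
      have hstep := hfVstep j (m - k j) hlen
      rw [segmentOf_get] at hstep
      rw [show k j + (m - k j) = m by omega] at hstep
      rw [show m + 1 - k j = (m - k j) + 1 by omega]
      exact hstep

lemma isSofic_empty {C : Type} : IsSofic (∅ : Set (ℕ → C)) := by
  refine ⟨Empty, inferInstance, ∅, ?_⟩
  ext x
  simp only [Set.mem_empty_iff_false, Set.mem_setOf_eq, false_iff]
  rintro ⟨p, -⟩
  exact (p 0).elim

lemma IsSofic.union {C : Type} {X Y : Set (ℕ → C)} (hX : IsSofic X) (hY : IsSofic Y) :
    IsSofic (X ∪ Y) := by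
  obtain ⟨V1, h1, E1, rfl⟩ := hX
  obtain ⟨V2, h2, E2, rfl⟩ := hY
  letI := h1; letI := h2
  refine ⟨V1 ⊕ V2, inferInstance,
    {t | (∃ a c b, t = (Sum.inl a, c, Sum.inl b) ∧ (a, c, b) ∈ E1) ∨
         (∃ a c b, t = (Sum.inr a, c, Sum.inr b) ∧ (a, c, b) ∈ E2)}, ?_⟩
  ext x
  constructor
  · rintro (⟨p, hp⟩ | ⟨p, hp⟩)
    · exact ⟨fun n => Sum.inl (p n), fun n => Or.inl ⟨p n, x n, p (n+1), rfl, hp n⟩⟩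
    · exact ⟨fun n => Sum.inr (p n), fun n => Or.inr ⟨p n, x n, p (n+1), rfl, hp n⟩⟩
  · rintro ⟨p, hp⟩
    cases hq0 : p 0 with
    | inl a =>
        have key : ∀ n, ∃ a, p n = Sum.inl a := by
          intro n
          induction n with
          | zero => exact ⟨a, hq0⟩
          | succ m ihm =>
              obtain ⟨b, hb⟩ := ihm
              rcases hp m with ⟨a', c', b', he, -⟩ | ⟨a', c', b', he, -⟩
              · obtain ⟨-, -, e3⟩ := (by
                  simpa [Prod.ext_iff] using he : p m = Sum.inl a' ∧ x m = c' ∧ p (m+1) = Sum.inl b')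
                exact ⟨b', e3⟩
              · obtain ⟨e1, -, -⟩ := (by
                  simpa [Prod.ext_iff] using he : p m = Sum.inr a' ∧ x m = c' ∧ p (m+1) = Sum.inr b')
                rw [hb] at e1
                exact absurd e1 (by simp)
        choose q hqn using key
        left
        refine ⟨q, fun n => ?_⟩
        rcases hp n with ⟨a', c', b', he, hmem⟩ | ⟨a', c', b', he, hmem⟩
        · obtain ⟨e1, e2, e3⟩ := (by
            simpa [Prod.ext_iff] using he : p n = Sum.inl a' ∧ x n = c' ∧ p (n+1) = Sum.inl b')
          have ha : q n = a' := by
            have := (hqn n).symm.trans e1; simpa using this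
          have hb : q (n+1) = b' := by
            have := (hqn (n+1)).symm.trans e3; simpa using this
          rw [ha, hb, e2]; exact hmem
        · obtain ⟨e1, -, -⟩ := (by
            simpa [Prod.ext_iff] using he : p n = Sum.inr a' ∧ x n = c' ∧ p (n+1) = Sum.inr b')
          rw [hqn n] at e1
          exact absurd e1 (by simp)
    | inr a =>
        have key : ∀ n, ∃ a, p n = Sum.inr a := by
          intro n
          induction n with
          | zero => exact ⟨a, hq0⟩
          | succ m ihm =>
              obtain ⟨b, hb⟩ := ihm
              rcases hp m with ⟨a', c', b', he, -⟩ | ⟨a', c', b', he, -⟩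
              · obtain ⟨e1, -, -⟩ := (by
                  simpa [Prod.ext_iff] using he : p m = Sum.inl a' ∧ x m = c' ∧ p (m+1) = Sum.inl b')
                rw [hb] at e1
                exact absurd e1 (by simp)
              · obtain ⟨-, -, e3⟩ := (by
                  simpa [Prod.ext_iff] using he : p m = Sum.inr a' ∧ x m = c' ∧ p (m+1) = Sum.inr b')
                exact ⟨b', e3⟩
        choose q hqn using key
        right
        refine ⟨q, fun n => ?_⟩
        rcases hp n with ⟨a', c', b', he, hmem⟩ | ⟨a', c', b', he, hmem⟩
        · obtain ⟨e1, -, -⟩ := (by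
            simpa [Prod.ext_iff] using he : p n = Sum.inl a' ∧ x n = c' ∧ p (n+1) = Sum.inl b')
          rw [hqn n] at e1
          exact absurd e1 (by simp)
        · obtain ⟨e1, e2, e3⟩ := (by
            simpa [Prod.ext_iff] using he : p n = Sum.inr a' ∧ x n = c' ∧ p (n+1) = Sum.inr b')
          have ha : q n = a' := by
            have := (hqn n).symm.trans e1; simpa using this
          have hb : q (n+1) = b' := by
            have := (hqn (n+1)).symm.trans e3; simpa using this
          rw [ha, hb, e2]; exact hmem

lemma isSofic_iUnion {C : Type} (n : ℕ) (Y : Fin n → Set (ℕ → C)) (h : ∀ i, IsSofic (Y i)) :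
    IsSofic (⋃ i, Y i) := by
  induction n with
  | zero => simpa using isSofic_empty
  | succ m ih =>
      have heq : (⋃ i, Y i) = Y 0 ∪ ⋃ i : Fin m, Y i.succ := by
        ext x
        simp only [Set.mem_iUnion, Set.mem_union]
        constructor
        · rintro ⟨i, hi⟩
          rcases Fin.eq_zero_or_eq_succ i with h0 | ⟨j, rfl⟩
          · exact Or.inl (h0 ▸ hi)
          · exact Or.inr ⟨j, hi⟩
        · rintro (h0 | ⟨j, hj⟩)
          · exact ⟨0, h0⟩
          · exact ⟨j.succ, hj⟩
      rw [heq]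
      exact (h 0).union (ih _ fun i => h i.succ)

section Buchi

variable {C σU σV : Type*} (MU : DFA C σU) (MV : DFA C σV)

def bStep : (σU ⊕ σV) → C → Set (σU ⊕ σV)
  | Sum.inl q, c => {p | p = Sum.inl (MU.step q c) ∨
      (q ∈ MU.accept ∧ p = Sum.inr (MV.step MV.start c))}
  | Sum.inr q, c => {p | p = Sum.inr (MV.step q c) ∨
      (q ∈ MV.accept ∧ p = Sum.inr (MV.step MV.start c))}

def bFinal : (σU ⊕ σV) → Prop
  | Sum.inl q => q ∈ MU.accept
  | Sum.inr q => q ∈ MV.accept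

def bR (q : σU ⊕ σV) (c : C) (q' : σU ⊕ σV) : Prop :=
  bFinal MU MV q ∧ q' = Sum.inr (MV.step MV.start c)

def IsBRun (x : ℕ → C) (f : ℕ → σU ⊕ σV) : Prop :=
  f 0 = Sum.inl MU.start ∧ (∀ n, f (n + 1) ∈ bStep MU MV (f n) (x n)) ∧
  {n : ℕ | bR MU MV (f n) (x n) (f (n + 1))}.Infinite

def bLang : Set (ℕ → C) := {x | ∃ f, IsBRun MU MV x f}

lemma bR_mem_bStep {q q' : σU ⊕ σV} {c : C} (h : bR MU MV q c q') :
    q' ∈ bStep MU MV q c := by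
  obtain ⟨hfin, rfl⟩ := h
  cases q with
  | inl a => exact Or.inr ⟨hfin, rfl⟩
  | inr a => exact Or.inr ⟨hfin, rfl⟩

lemma eval_singleton (c : C) : MV.eval [c] = MV.step MV.start c := rfl

lemma omegaIter_subset_bLang (U V : Set (List C))
    (hU : ∀ w, w ∈ MU.accepts ↔ w ∈ U) (hV : ∀ w, w ∈ MV.accepts ↔ w ∈ V) :
    omegaIter U V ⊆ bLang MU MV := by
  rintro x ⟨k, hkmono, hkU, hkV⟩
  classical
  have hjle : ∀ j, j ≤ k j := fun j => hkmono.le_apply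
  have hklt : ∀ j, k j < k (j + 1) := fun j => hkmono (Nat.lt_succ_self j)
  set jn : ℕ → ℕ := fun m => Nat.findGreatest (fun j => k j < m) m with hjn
  have spec : ∀ m, k 0 < m → k (jn m) < m := fun m hm =>
    Nat.findGreatest_spec (P := fun j => k j < m) (Nat.zero_le m) hm
  have lt2 : ∀ m, k 0 < m → m ≤ k (jn m + 1) := by
    intro m hm
    by_contra hcon
    push_neg at hcon
    exact Nat.findGreatest_is_greatest (P := fun j => k j < m) (Nat.lt_succ_self _)
      (by show jn m + 1 ≤ m; have := hjle (jn m + 1); omega) hcon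
  have uniq : ∀ m j, k j < m → m ≤ k (j + 1) → jn m = j := by
    intro m j h1 h2
    have hge : j ≤ jn m :=
      Nat.le_findGreatest (P := fun j => k j < m) (by have := hjle j; omega) h1
    have hle : jn m ≤ j := by
      by_contra hcon
      push_neg at hcon
      have h3 : k (j + 1) ≤ k (jn m) := hkmono.monotone hcon
      have h4 := spec m (lt_of_le_of_lt (hkmono.monotone (Nat.zero_le j)) h1)
      omega
    omega
  set f : ℕ → σU ⊕ σV := fun m =>
    if m ≤ k 0 then Sum.inl (MU.eval (segmentOf x 0 m))
    else Sum.inr (MV.eval (segmentOf x (k (jn m)) m)) with hf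
  have hfU : ∀ m, m ≤ k 0 → f m = Sum.inl (MU.eval (segmentOf x 0 m)) := by
    intro m hm; simp [hf, hm]
  have hfV : ∀ m j, k j < m → m ≤ k (j + 1) →
      f m = Sum.inr (MV.eval (segmentOf x (k j) m)) := by
    intro m j h1 h2
    have h0 : ¬ (m ≤ k 0) := by
      have := hkmono.monotone (Nat.zero_le j); omega
    rw [hf]
    simp only [h0, if_false]
    rw [uniq m j h1 h2]
  have hbdry : ∀ j, f (k j + 1) = Sum.inr (MV.step MV.start (x (k j))) := by
    intro j
    rw [hfV (k j + 1) j (Nat.lt_succ_self _) (hklt j)]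
    rw [show k j + 1 = k j + 1 from rfl, segmentOf_succ x (k j) (k j) le_rfl]
    have : segmentOf x (k j) (k j) = [] := by simp [segmentOf]
    rw [this, List.nil_append, eval_singleton]
  have hfinal : ∀ j, bFinal MU MV (f (k j)) := by
    intro j
    cases j with
    | zero =>
        rw [hfU (k 0) le_rfl]
        show MU.eval (segmentOf x 0 (k 0)) ∈ MU.accept
        exact (DFA.mem_accepts MU).mp ((hU _).mpr hkU)
    | succ j =>
        rw [hfV (k (j + 1)) j (hklt j) le_rfl]
        show MV.eval (segmentOf x (k j) (k (j + 1))) ∈ MV.accept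
        exact (DFA.mem_accepts MV).mp ((hV _).mpr (hkV j))
  have hRat : ∀ j, bR MU MV (f (k j)) (x (k j)) (f (k j + 1)) :=
    fun j => ⟨hfinal j, hbdry j⟩
  refine ⟨f, ?_, ?_, ?_⟩
  · rw [hfU 0 (Nat.zero_le _)]
    have : segmentOf x 0 0 = [] := by simp [segmentOf]
    rw [this]
    rfl
  · intro m
    rcases Nat.lt_trichotomy m (k 0) with hm | hm | hm
    · rw [hfU m hm.le, hfU (m + 1) hm]
      rw [segmentOf_succ x 0 m (Nat.zero_le m), DFA.eval_append_singleton]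
      exact Or.inl rfl
    · exact bR_mem_bStep MU MV (hm ▸ hRat 0)
    · set j := jn m with hj
      have h1 : k j < m := spec m hm
      have h2 : m ≤ k (j + 1) := lt2 m hm
      rcases Nat.lt_or_ge m (k (j + 1)) with h3 | h3
      · rw [hfV m j h1 h2, hfV (m + 1) j (by omega) (by omega)]
        rw [segmentOf_succ x (k j) m (by omega), DFA.eval_append_singleton]
        exact Or.inl rfl
      · have hm' : m = k (j + 1) := by omega
        exact bR_mem_bStep MU MV (hm' ▸ hRat (j + 1))
  · apply Set.Infinite.mono (s := Set.range k)
    · rintro _ ⟨j, rfl⟩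
      exact hRat j
    · exact Set.infinite_range_of_injective hkmono.injective

lemma bLang_subset_omegaIter (U V : Set (List C))
    (hU : ∀ w, w ∈ MU.accepts ↔ w ∈ U) (hV : ∀ w, w ∈ MV.accepts ↔ w ∈ V) :
    bLang MU MV ⊆ omegaIter U V := by
  rintro x ⟨f, hf0, hfstep, hfinf⟩
  classical
  set p : ℕ → Prop := fun m => bR MU MV (f m) (x m) (f (m + 1)) with hp
  have hinf : (setOf p).Infinite := hfinf
  set k : ℕ → ℕ := fun j => Nat.nth p j with hk
  have hkmono : StrictMono k := Nat.nth_strictMono hinf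
  have hkmem : ∀ j, p (k j) := fun j => Nat.nth_mem_of_infinite hinf j
  have hsurj : ∀ m, p m → ∃ j, k j = m := fun m hm => ⟨Nat.count p m, Nat.nth_count hm⟩
  have hnotp : ∀ m, m < k 0 → ¬ p m := by
    intro m hm hpm
    obtain ⟨j, hj⟩ := hsurj m hpm
    have : k 0 ≤ k j := hkmono.monotone (Nat.zero_le j)
    omega
  have hnotp2 : ∀ j m, k j < m → m < k (j + 1) → ¬ p m := by
    intro j m h1 h2 hpm
    obtain ⟨j', hj'⟩ := hsurj m hpm
    rcases Nat.lt_or_ge j' (j + 1) with h3 | h3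
    · have : k j' ≤ k j := hkmono.monotone (by omega)
      omega
    · have : k (j + 1) ≤ k j' := hkmono.monotone h3
      omega
  have hC1 : ∀ m, m ≤ k 0 → f m = Sum.inl (MU.eval (segmentOf x 0 m)) := by
    intro m
    induction m with
    | zero =>
        intro _
        have hseg : segmentOf x 0 0 = [] := by simp [segmentOf]
        rw [hseg, hf0]; rfl
    | succ m ih =>
        intro hm
        have hfm := ih (by omega)
        have hstep := hfstep m
        rw [hfm] at hstep
        rcases hstep with h | h
        · rw [h, segmentOf_succ x 0 m (Nat.zero_le m), DFA.eval_append_singleton]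
        · exact absurd (show p m from ⟨by rw [hfm]; exact h.1, h.2⟩) (hnotp m (by omega))
  have hC3 : ∀ j m, k j < m → m ≤ k (j + 1) →
      f m = Sum.inr (MV.eval (segmentOf x (k j) m)) := by
    intro j m
    induction m with
    | zero => intro h1 _; omega
    | succ m ih =>
        intro h1 h2
        rcases Nat.lt_or_ge (k j) m with hlt | hge
        · have hfm := ih hlt (by omega)
          have hstep := hfstep m
          rw [hfm] at hstep
          rcases hstep with h | h
          · rw [h, segmentOf_succ x (k j) m (by omega), DFA.eval_append_singleton]
          · exact absurd (show p m from ⟨by rw [hfm]; exact h.1, h.2⟩)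
              (hnotp2 j m hlt (by omega))
        · have hmeq : m = k j := by omega
          have hthis := (hkmem j).2
          rw [← hmeq] at hthis
          rw [hthis, hmeq, segmentOf_succ x (k j) (k j) le_rfl]
          have hseg : segmentOf x (k j) (k j) = [] := by simp [segmentOf]
          rw [hseg, List.nil_append, eval_singleton]
  refine ⟨k, hkmono, ?_, ?_⟩
  · have hfin := (hkmem 0).1
    rw [hC1 (k 0) le_rfl] at hfin
    exact (hU _).mp ((DFA.mem_accepts MU).mpr hfin)
  · intro j
    have hfin := (hkmem (j + 1)).1
    rw [hC3 j (k (j + 1)) (hkmono (Nat.lt_succ_self j)) le_rfl] at hfin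
    exact (hV _).mp ((DFA.mem_accepts MV).mpr hfin)

end Buchi

lemma shift_infinite {B : Set ℕ} (h : B.Infinite) (m : ℕ) : {t : ℕ | m + t ∈ B}.Infinite := by
  have hsub : B ⊆ Set.Iio m ∪ (fun t => m + t) '' {t | m + t ∈ B} := by
    intro j hj
    rcases Nat.lt_or_ge j m with hh | hh
    · exact Or.inl hh
    · exact Or.inr ⟨j - m, by simpa [show m + (j - m) = j by omega] using hj, by show m + (j - m) = j; omega⟩
  by_contra hfin
  rw [Set.not_infinite] at hfin
  exact h (Set.Finite.subset ((Set.finite_Iio m).union (hfin.image _)) hsub)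

lemma shiftMap_iterate_apply {C : Type*} (kk : ℕ) : ∀ (y : ℕ → C) (m : ℕ),
    (shiftMap^[kk] y) m = y (m + kk) := by
  induction kk with
  | zero => intro y m; simp
  | succ j ih =>
      intro y m
      rw [Function.iterate_succ_apply, ih (shiftMap y) m]
      rfl

lemma shiftMap_iterate_mem {C : Type*} {X : Set (ℕ → C)} (hs : ∀ x ∈ X, shiftMap x ∈ X)
    (kk : ℕ) : ∀ y ∈ X, shiftMap^[kk] y ∈ X := by
  induction kk with
  | zero => intro y hy; simpa using hy
  | succ j ih =>
      intro y hy
      rw [Function.iterate_succ_apply]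
      exact ih _ (hs y hy)

theorem omegaRegular_to_sofic {C : Type} (X : Set (ℕ → C)) (hsub : IsSubshift X)
    (h : IsOmegaRegular X) : IsSofic X := by
  classical
  obtain ⟨n, U, V, hreg, hXU⟩ := h
  choose σU instU MU hMU using fun i => (hreg i).1
  choose σV instV MV hMV using fun i => (hreg i).2
  let Q : Fin n → Type := fun i => σU i ⊕ σV i
  let Acc : ∀ i, Q i → Prop := fun i q =>
    ∃ (w : List C) (g : ℕ → Q i), g 0 = Sum.inl (MU i).start ∧ g w.length = q ∧
      ∀ m (hm : m < w.length), g (m + 1) ∈ bStep (MU i) (MV i) (g m) (w.get ⟨m, hm⟩)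
  let Coacc : ∀ i, Q i → Prop := fun i q =>
    ∃ (z : ℕ → C) (g : ℕ → Q i), g 0 = q ∧
      (∀ m, g (m + 1) ∈ bStep (MU i) (MV i) (g m) (z m)) ∧
      {m : ℕ | bR (MU i) (MV i) (g m) (z m) (g (m + 1))}.Infinite
  let E : ∀ i, Set (Q i × C × Q i) := fun i =>
    {t | t.2.2 ∈ bStep (MU i) (MV i) t.1 t.2.1 ∧ Acc i t.1 ∧ Coacc i t.1}
  let S : Fin n → Set (ℕ → C) := fun i =>
    {x | ∃ p : ℕ → Q i, ∀ m : ℕ, (p m, x m, p (m + 1)) ∈ E i}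
  have hSsofic : ∀ i, IsSofic (S i) := fun i =>
    ⟨Q i, (by letI := instU i; letI := instV i; exact inferInstance), E i, rfl⟩
  have hbl : ∀ i, bLang (MU i) (MV i) = omegaIter (U i) (V i) := fun i =>
    Set.eq_of_subset_of_subset
      (bLang_subset_omegaIter (MU i) (MV i) (U i) (V i) (hMU i) (hMV i))
      (omegaIter_subset_bLang (MU i) (MV i) (U i) (V i) (hMU i) (hMV i))
  have hXS : X = ⋃ i, S i := by
    apply Set.eq_of_subset_of_subset
    · intro x hx
      rw [hXU] at hx
      obtain ⟨i, hxi⟩ := Set.mem_iUnion.1 hx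
      rw [← hbl i] at hxi
      obtain ⟨f, hf0, hfstep, hfinf⟩ := hxi
      refine Set.mem_iUnion.2 ⟨i, f, fun m => ?_⟩
      refine ⟨hfstep m, ?_, ?_⟩
      · refine ⟨segmentOf x 0 m, f, hf0, by simp [segmentOf_length], ?_⟩
        intro j hj
        rw [segmentOf_get, Nat.zero_add]
        exact hfstep j
      · refine ⟨fun t => x (m + t), fun t => f (m + t), rfl, ?_, ?_⟩
        · intro t
          show f (m + (t + 1)) ∈ _
          rw [show m + (t + 1) = (m + t) + 1 by omega]
          exact hfstep (m + t)
        · exact shift_infinite hfinf m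
    · intro x hx
      obtain ⟨i, hxi⟩ := Set.mem_iUnion.1 hx
      obtain ⟨p, hp⟩ := hxi
      apply hsub.2
      intro N
      obtain ⟨w, g, hg0, hglen, hgstep⟩ := (hp 0).2.1
      obtain ⟨z, g', hg'0, hg'step, hg'inf⟩ := (hp N).2.2
      have hglen' : g w.length = p 0 := hglen
      have hg'0' : g' 0 = p N := hg'0
      set L := w.length with hL
      set y : ℕ → C := fun m =>
        if hm : m < L then w.get ⟨m, hm⟩
        else if m < L + N then x (m - L) else z (m - (L + N)) with hy
      set hr : ℕ → Q i := fun m =>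
        if m < L then g m else if m < L + N then p (m - L) else g' (m - (L + N)) with hhr
      have hrA : ∀ m, m < L → hr m = g m := by intro m hm; simp [hhr, hm]
      have hrB : ∀ m, L ≤ m → m ≤ L + N → hr m = p (m - L) := by
        intro m h1 h2
        rcases Nat.lt_or_ge m (L + N) with h3 | h3
        · simp [hhr, Nat.not_lt.2 h1, h3]
        · have h4 : m = L + N := by omega
          simp only [hhr, if_neg (Nat.not_lt.2 h1), if_neg (Nat.not_lt.2 h3)]
          rw [show m - (L + N) = 0 by omega, hg'0', show m - L = N by omega]
      have hrC : ∀ m, L + N ≤ m → hr m = g' (m - (L + N)) := by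
        intro m h1
        simp [hhr, Nat.not_lt.2 (show L ≤ m by omega), Nat.not_lt.2 h1]
      have hyA : ∀ m (hm : m < L), y m = w.get ⟨m, hm⟩ := by
        intro m hm; simp [hy, hm]
      have hyB : ∀ m, L ≤ m → m < L + N → y m = x (m - L) := by
        intro m h1 h2; simp [hy, Nat.not_lt.2 h1, h2]
      have hyC : ∀ m, L + N ≤ m → y m = z (m - (L + N)) := by
        intro m h1
        simp [hy, Nat.not_lt.2 (show L ≤ m by omega), Nat.not_lt.2 h1]
      have hrg : ∀ m, m ≤ L → hr m = g m := by
        intro m hm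
        rcases Nat.lt_or_ge m L with h1 | h1
        · exact hrA m h1
        · have h2 : m = L := by omega
          rw [hrB m h1 (by omega), h2, Nat.sub_self, ← hglen']
      have run0 : hr 0 = Sum.inl (MU i).start := by rw [hrg 0 (Nat.zero_le L), hg0]
      have runstep : ∀ m, hr (m + 1) ∈ bStep (MU i) (MV i) (hr m) (y m) := by
        intro m
        rcases Nat.lt_or_ge m L with h1 | h1
        · rw [hrA m h1, hrg (m + 1) h1, hyA m h1]
          exact hgstep m h1
        · rcases Nat.lt_or_ge m (L + N) with h2 | h2
          · rw [hrB m h1 (by omega), hrB (m + 1) (by omega) (by omega), hyB m h1 h2]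
            rw [show m + 1 - L = (m - L) + 1 by omega]
            exact (hp (m - L)).1
          · rw [hrC m h2, hrC (m + 1) (by omega), hyC m h2]
            rw [show m + 1 - (L + N) = (m - (L + N)) + 1 by omega]
            exact hg'step (m - (L + N))
      have runinf : {m : ℕ | bR (MU i) (MV i) (hr m) (y m) (hr (m + 1))}.Infinite := by
        apply Set.Infinite.mono
          (s := (fun t => (L + N) + t) '' {t | bR (MU i) (MV i) (g' t) (z t) (g' (t + 1))})
        · rintro _ ⟨t, ht, rfl⟩
          show bR (MU i) (MV i) (hr ((L + N) + t)) (y ((L + N) + t)) (hr ((L + N) + t + 1)) 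
          rw [hrC _ (by omega), hrC _ (by omega), hyC _ (by omega)]
          rw [show (L + N) + t - (L + N) = t by omega,
            show (L + N) + t + 1 - (L + N) = t + 1 by omega]
          exact ht
        · exact Set.Infinite.image (fun a _ b _ hab => by omega) hg'inf
      have hyX : y ∈ X := by
        rw [hXU]
        refine Set.mem_iUnion.2 ⟨i, ?_⟩
        rw [← hbl i]
        exact ⟨hr, run0, runstep, runinf⟩
      refine ⟨shiftMap^[L] y, shiftMap_iterate_mem hsub.1 L y hyX, ?_⟩
      intro j hj
      rw [shiftMap_iterate_apply L y j, hyB (j + L) (by omega) (by omega),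
        show j + L - L = j by omega]
  rw [hXS]
  exact isSofic_iUnion n S hSsofic

/-- A subshift over a finite alphabet is sofic iff it is ω-regular. -/
theorem stmt15 {C : Type} [Fintype C] (X : Set (ℕ → C)) (hsub : IsSubshift X) :
    IsSofic X ↔ IsOmegaRegular X :=
  ⟨sofic_to_omegaRegular X, omegaRegular_to_sofic X hsub⟩
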